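/- At an optimal solution of the joint assortment and pricing problem under the Threshold Luce model, net utilities are nonincreasing in the product index: u_i − p*_i ≥ u_{i+1} − p*_{i+1} for consecutive offered products i and i+1 (products indexed by decreasing intrinsic utility). -/

import Mathlib

open Set

lemma deriv_nonneg_of_max_right {f : ℝ → ℝ} {b a d : ℝ} (hba : b < a)
    (hmax : ∀ x ∈ Set.Icc b a, f x ≤ f a) (hd : HasDerivAt f d a) : 0 ≤ d := by
  have hmaxon : IsLocalMaxOn f (Set.Icc b a) a := (isMaxOn_iff.mpr hmax).localize
  have hy : (b - a) ∈ posTangentConeAt (Set.Icc b a) a := by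
    apply mem_posTangentConeAt_of_segment_subset
    rw [show a + (b - a) = b by ring, segment_symm, segment_eq_Icc hba.le]
  have hle := hmaxon.hasFDerivWithinAt_nonpos hd.hasFDerivAt.hasFDerivWithinAt hy
  simp only [ContinuousLinearMap.toSpanSingleton_apply,
    smul_eq_mul] at hle
  nlinarith

lemma deriv_nonpos_of_max_left {f : ℝ → ℝ} {b a d : ℝ} (hba : b < a)
    (hmax : ∀ x ∈ Set.Icc b a, f x ≤ f b) (hd : HasDerivAt f d b) : d ≤ 0 := by
  have hmaxon : IsLocalMaxOn f (Set.Icc b a) b := (isMaxOn_iff.mpr hmax).localize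
  have hy : (a - b) ∈ posTangentConeAt (Set.Icc b a) b := by
    apply mem_posTangentConeAt_of_segment_subset
    rw [show b + (a - b) = a by ring, segment_eq_Icc hba.le]
  have hle := hmaxon.hasFDerivWithinAt_nonpos hd.hasFDerivAt.hasFDerivWithinAt hy
  simp only [ContinuousLinearMap.toSpanSingleton_apply,
    smul_eq_mul] at hle
  nlinarith

lemma hasDerivAt_g (A B c a : ℝ) (hB : 0 < B + Real.exp (c - a)) :
    HasDerivAt (fun x => (A + x * Real.exp (c - x)) / (B + Real.exp (c - x)))
      (Real.exp (c - a) * ((1 - a) * (B + Real.exp (c - a)) + (A + a * Real.exp (c - a))) /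
        (B + Real.exp (c - a)) ^ 2) a := by
  have hexp : HasDerivAt (fun x : ℝ => Real.exp (c - x)) (Real.exp (c - a) * (-1)) a :=
    (((hasDerivAt_id a).const_sub c).exp)
  have hnum : HasDerivAt (fun x : ℝ => A + x * Real.exp (c - x))
      (0 + (1 * Real.exp (c - a) + a * (Real.exp (c - a) * (-1)))) a :=
    (hasDerivAt_const a A).add ((hasDerivAt_id a).mul hexp)
  have hden : HasDerivAt (fun x : ℝ => B + Real.exp (c - x))
      (0 + Real.exp (c - a) * (-1)) a := (hasDerivAt_const a B).add hexp
  have h := hnum.div hden (ne_of_gt hB)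
  convert h using 1
  · rfl
  · rfl
  · rfl
  ring

lemma sum_update_erase {n : ℕ} (S : Finset (Fin n)) (m : Fin n) (hm : m ∈ S)
    (F : Fin n → ℝ → ℝ) (p : Fin n → ℝ) (x : ℝ) :
    ∑ k ∈ S, F k (Function.update p m x k) = F m x + ∑ k ∈ S.erase m, F k (p k) := by
  rw [← Finset.add_sum_erase S (fun k => F k (Function.update p m x k)) hm,
    Function.update_self]
  congr 1
  refine Finset.sum_congr rfl fun k hk => ?_
  rw [Function.update_of_ne (Finset.mem_erase.1 hk).1]

set_option maxHeartbeats 1600000 in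
/-- At an optimal solution of the joint assortment and pricing problem under the
Threshold Luce model, net utilities `uᵢ − pᵢ` are nonincreasing in the product index
among offered products (products indexed by decreasing intrinsic utility). -/
theorem optimal_net_utilities_nonincreasing {n : ℕ}
    (u : Fin n → ℝ) (a0 t : ℝ) (ha0 : 0 < a0) (ht : 0 < t)
    (hsort : ∀ i j : Fin n, i ≤ j → u j ≤ u i) :
    let R : Finset (Fin n) → (Fin n → ℝ) → ℝ := fun A q =>
      (∑ k ∈ A, q k * Real.exp (u k - q k)) /
        ((∑ k ∈ A, Real.exp (u k - q k)) + a0)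
    let valid : Finset (Fin n) → (Fin n → ℝ) → Prop := fun A q =>
      ∀ j ∈ A, ∀ i ∈ A, Real.exp (u i - q i) ≤ (1 + t) * Real.exp (u j - q j)
    ∀ (Sstar : Finset (Fin n)) (pstar : Fin n → ℝ), valid Sstar pstar →
      (∀ S q, valid S q → R S q ≤ R Sstar pstar) →
      ∀ i ∈ Sstar, ∀ j ∈ Sstar, i ≤ j → u j - pstar j ≤ u i - pstar i := by
  intro R valid Sstar pstar hvalid hopt i hi j hj hij
  have hR : ∀ S q, R S q = (∑ k ∈ S, q k * Real.exp (u k - q k)) /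
      ((∑ k ∈ S, Real.exp (u k - q k)) + a0) := fun _ _ => rfl
  have hV : ∀ S q, valid S q ↔
      (∀ j ∈ S, ∀ i ∈ S, Real.exp (u i - q i) ≤ (1 + t) * Real.exp (u j - q j)) :=
    fun _ _ => Iff.rfl
  by_contra hcon
  push_neg at hcon
  have hij_ne : i ≠ j := by rintro rfl; exact lt_irrefl _ hcon
  have huji : u j ≤ u i := hsort i j hij
  set p := pstar with hp
  have hei : (0:ℝ) < Real.exp (u i - p i) := Real.exp_pos _
  have hej : (0:ℝ) < Real.exp (u j - p j) := Real.exp_pos _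
  have heij : Real.exp (u i - p i) < Real.exp (u j - p j) := Real.exp_lt_exp.2 hcon
  have hden : 0 < (∑ k ∈ Sstar, Real.exp (u k - p k)) + a0 := by
    have h0 : (0:ℝ) ≤ ∑ k ∈ Sstar, Real.exp (u k - p k) :=
      Finset.sum_nonneg fun k _ => (Real.exp_pos _).le
    linarith
  rcases eq_or_lt_of_le huji with hcu | hcu
  · -- u j = u i : derivative argument
    have hpj : p j < p i := by rw [hcu] at hcon; linarith
    set Ai := ∑ k ∈ Sstar.erase i, p k * Real.exp (u k - p k) with hAi
    set Bi := (∑ k ∈ Sstar.erase i, Real.exp (u k - p k)) + a0 with hBi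
    set Aj := ∑ k ∈ Sstar.erase j, p k * Real.exp (u k - p k) with hAj
    set Bj := (∑ k ∈ Sstar.erase j, Real.exp (u k - p k)) + a0 with hBj
    have hBi_pos : 0 < Bi + Real.exp (u i - p i) := by
      have h0 : (0:ℝ) ≤ ∑ k ∈ Sstar.erase i, Real.exp (u k - p k) :=
        Finset.sum_nonneg fun k _ => (Real.exp_pos _).le
      rw [hBi]; linarith
    have hBj_pos : 0 < Bj + Real.exp (u j - p j) := by
      have h0 : (0:ℝ) ≤ ∑ k ∈ Sstar.erase j, Real.exp (u k - p k) :=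
        Finset.sum_nonneg fun k _ => (Real.exp_pos _).le
      rw [hBj]; linarith
    -- totals
    have hNi : Ai + p i * Real.exp (u i - p i) = ∑ k ∈ Sstar, p k * Real.exp (u k - p k) := by
      rw [hAi, add_comm]
      exact Finset.add_sum_erase Sstar (fun k => p k * Real.exp (u k - p k)) hi
    have hDi : Bi + Real.exp (u i - p i) = (∑ k ∈ Sstar, Real.exp (u k - p k)) + a0 := by
      rw [hBi]
      have := Finset.add_sum_erase Sstar (fun k => Real.exp (u k - p k)) hi
      linarith
    have hNj : Aj + p j * Real.exp (u j - p j) = ∑ k ∈ Sstar, p k * Real.exp (u k - p k) := by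
      rw [hAj, add_comm]
      exact Finset.add_sum_erase Sstar (fun k => p k * Real.exp (u k - p k)) hj
    have hDj : Bj + Real.exp (u j - p j) = (∑ k ∈ Sstar, Real.exp (u k - p k)) + a0 := by
      rw [hBj]
      have := Finset.add_sum_erase Sstar (fun k => Real.exp (u k - p k)) hj
      linarith
    -- max property for perturbation of p i
    have hmax_i : ∀ x ∈ Set.Icc (p j) (p i),
        (Ai + x * Real.exp (u i - x)) / (Bi + Real.exp (u i - x)) ≤
        (Ai + p i * Real.exp (u i - p i)) / (Bi + Real.exp (u i - p i)) := by
      intro x hx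
      obtain ⟨hx1, hx2⟩ := hx
      have hvq : valid Sstar (Function.update p i x) := by
        rw [hV]
        intro b' hb' a' ha'
        by_cases hai : a' = i <;> by_cases hbi : b' = i
        · rw [hai, hbi, Function.update_self]
          nlinarith [Real.exp_pos (u i - x)]
        · rw [hai, Function.update_self, Function.update_of_ne hbi]
          calc Real.exp (u i - x) ≤ Real.exp (u j - p j) :=
                Real.exp_le_exp.2 (by rw [hcu]; linarith)
            _ ≤ (1 + t) * Real.exp (u b' - p b') := hvalid b' hb' j hj
        · rw [hbi, Function.update_of_ne hai, Function.update_self]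
          calc Real.exp (u a' - p a') ≤ (1 + t) * Real.exp (u i - p i) := hvalid i hi a' ha'
            _ ≤ (1 + t) * Real.exp (u i - x) :=
                mul_le_mul_of_nonneg_left (Real.exp_le_exp.2 (by linarith)) (by linarith)
        · rw [Function.update_of_ne hai, Function.update_of_ne hbi]
          exact hvalid b' hb' a' ha'
      have h1 := hopt Sstar (Function.update p i x) hvq
      rw [hR, hR] at h1
      rw [sum_update_erase Sstar i hi (fun k y => y * Real.exp (u k - y)) p x,
        sum_update_erase Sstar i hi (fun k y => Real.exp (u k - y)) p x] at h1
      have heq : (Ai + x * Real.exp (u i - x)) / (Bi + Real.exp (u i - x)) =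
          (x * Real.exp (u i - x) + ∑ k ∈ Sstar.erase i, p k * Real.exp (u k - p k)) /
          (Real.exp (u i - x) + (∑ k ∈ Sstar.erase i, Real.exp (u k - p k)) + a0) := by
        rw [hAi, hBi]; congr 1 <;> ring
      rw [heq, hNi, hDi]
      exact h1
    have hmax_j : ∀ x ∈ Set.Icc (p j) (p i),
        (Aj + x * Real.exp (u j - x)) / (Bj + Real.exp (u j - x)) ≤
        (Aj + p j * Real.exp (u j - p j)) / (Bj + Real.exp (u j - p j)) := by
      intro x hx
      obtain ⟨hx1, hx2⟩ := hx
      have hvq : valid Sstar (Function.update p j x) := by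
        rw [hV]
        intro b' hb' a' ha'
        by_cases hai : a' = j <;> by_cases hbi : b' = j
        · rw [hai, hbi, Function.update_self]
          nlinarith [Real.exp_pos (u j - x)]
        · rw [hai, Function.update_self, Function.update_of_ne hbi]
          calc Real.exp (u j - x) ≤ Real.exp (u j - p j) :=
                Real.exp_le_exp.2 (by linarith)
            _ ≤ (1 + t) * Real.exp (u b' - p b') := hvalid b' hb' j hj
        · rw [hbi, Function.update_of_ne hai, Function.update_self]
          calc Real.exp (u a' - p a') ≤ (1 + t) * Real.exp (u i - p i) := hvalid i hi a' ha'
            _ ≤ (1 + t) * Real.exp (u j - x) :=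
                mul_le_mul_of_nonneg_left (Real.exp_le_exp.2 (by rw [hcu]; linarith))
                  (by linarith)
        · rw [Function.update_of_ne hai, Function.update_of_ne hbi]
          exact hvalid b' hb' a' ha'
      have h1 := hopt Sstar (Function.update p j x) hvq
      rw [hR, hR] at h1
      rw [sum_update_erase Sstar j hj (fun k y => y * Real.exp (u k - y)) p x,
        sum_update_erase Sstar j hj (fun k y => Real.exp (u k - y)) p x] at h1
      have heq : (Aj + x * Real.exp (u j - x)) / (Bj + Real.exp (u j - x)) =
          (x * Real.exp (u j - x) + ∑ k ∈ Sstar.erase j, p k * Real.exp (u k - p k)) /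
          (Real.exp (u j - x) + (∑ k ∈ Sstar.erase j, Real.exp (u k - p k)) + a0) := by
        rw [hAj, hBj]; congr 1 <;> ring
      rw [heq, hNj, hDj]
      exact h1
    -- derivative sign at the right endpoint
    have hd_i := hasDerivAt_g Ai Bi (u i) (p i) hBi_pos
    have h1 := deriv_nonneg_of_max_right hpj hmax_i hd_i
    have h2 : 0 ≤ (1 - p i) * (Bi + Real.exp (u i - p i)) +
        (Ai + p i * Real.exp (u i - p i)) := by
      by_contra h
      push_neg at h
      have hm : Real.exp (u i - p i) * ((1 - p i) * (Bi + Real.exp (u i - p i)) +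
          (Ai + p i * Real.exp (u i - p i))) < 0 := mul_neg_of_pos_of_neg hei h
      have : Real.exp (u i - p i) * ((1 - p i) * (Bi + Real.exp (u i - p i)) +
          (Ai + p i * Real.exp (u i - p i))) / (Bi + Real.exp (u i - p i)) ^ 2 < 0 :=
        div_neg_of_neg_of_pos hm (by positivity)
      linarith
    -- derivative sign at the left endpoint
    have hd_j := hasDerivAt_g Aj Bj (u j) (p j) hBj_pos
    have h3 := deriv_nonpos_of_max_left hpj hmax_j hd_j
    have h4 : (1 - p j) * (Bj + Real.exp (u j - p j)) +
        (Aj + p j * Real.exp (u j - p j)) ≤ 0 := by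
      by_contra h
      push_neg at h
      have hm : 0 < Real.exp (u j - p j) * ((1 - p j) * (Bj + Real.exp (u j - p j)) +
          (Aj + p j * Real.exp (u j - p j))) := mul_pos hej h
      have : 0 < Real.exp (u j - p j) * ((1 - p j) * (Bj + Real.exp (u j - p j)) +
          (Aj + p j * Real.exp (u j - p j))) / (Bj + Real.exp (u j - p j)) ^ 2 :=
        div_pos hm (by positivity)
      linarith
    rw [hDi, hNi] at h2
    rw [hDj, hNj] at h4
    nlinarith [hden]
  · -- u j < u i : swap argument
    set a := p j + u i - u j with ha
    set b := p i + u j - u i with hb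
    have hub : u j - b = u i - p i := by rw [hb]; ring
    have hua : u i - a = u j - p j := by rw [ha]; ring
    set q : Fin n → ℝ := Function.update (Function.update p i a) j b with hq
    have hqj : q j = b := by rw [hq, Function.update_self]
    have hqi : q i = a := by
      rw [hq, Function.update_of_ne hij_ne, Function.update_self]
    have hqk : ∀ k, k ≠ i → k ≠ j → q k = p k := by
      intro k hki hkj
      rw [hq, Function.update_of_ne hkj, Function.update_of_ne hki]
    have hswap : ∀ k, Real.exp (u k - q k) =
        Real.exp (u (Equiv.swap i j k) - p (Equiv.swap i j k)) := by
      intro k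
      by_cases hki : k = i
      · rw [hki, Equiv.swap_apply_left, hqi, hua]
      by_cases hkj : k = j
      · rw [hkj, Equiv.swap_apply_right, hqj, hub]
      · rw [Equiv.swap_apply_of_ne_of_ne hki hkj, hqk k hki hkj]
    have hmem : ∀ k ∈ Sstar, Equiv.swap i j k ∈ Sstar := by
      intro k hk
      by_cases hki : k = i
      · rw [hki, Equiv.swap_apply_left]; exact hj
      by_cases hkj : k = j
      · rw [hkj, Equiv.swap_apply_right]; exact hi
      · rw [Equiv.swap_apply_of_ne_of_ne hki hkj]; exact hk
    have hvq : valid Sstar q := by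
      rw [hV]
      intro b' hb' a' ha'
      rw [hswap a', hswap b']
      exact hvalid _ (hmem b' hb') _ (hmem a' ha')
    have hiS' : i ∈ Sstar.erase j := Finset.mem_erase.2 ⟨hij_ne, hi⟩
    have hsum : ∀ F : Fin n → ℝ → ℝ, ∑ k ∈ Sstar, F k (q k) =
        F j b + (F i a + ∑ k ∈ (Sstar.erase j).erase i, F k (p k)) := by
      intro F
      rw [hq, sum_update_erase Sstar j hj F (Function.update p i a) b,
        sum_update_erase (Sstar.erase j) i hiS' F p a]
    have hsum' : ∀ F : Fin n → ℝ → ℝ, ∑ k ∈ Sstar, F k (p k) =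
        F j (p j) + (F i (p i) + ∑ k ∈ (Sstar.erase j).erase i, F k (p k)) := by
      intro F
      rw [← Finset.add_sum_erase Sstar (fun k => F k (p k)) hj,
        ← Finset.add_sum_erase (Sstar.erase j) (fun k => F k (p k)) hiS']
    have h1 := hsum (fun k y => y * Real.exp (u k - y))
    have h2 := hsum (fun k y => Real.exp (u k - y))
    have h1' := hsum' (fun k y => y * Real.exp (u k - y))
    have h2' := hsum' (fun k y => Real.exp (u k - y))
    simp only [hub, hua] at h1 h2
    have hopt' := hopt Sstar q hvq
    rw [hR, hR] at hopt'
    rw [h1, h2, h1', h2'] at hopt'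
    have hdpos : 0 < Real.exp (u j - p j) + (Real.exp (u i - p i) +
        ∑ k ∈ (Sstar.erase j).erase i, Real.exp (u k - p k)) + a0 := by
      have h0 : (0:ℝ) ≤ ∑ k ∈ (Sstar.erase j).erase i, Real.exp (u k - p k) :=
        Finset.sum_nonneg fun k _ => (Real.exp_pos _).le
      linarith
    have hdeq : Real.exp (u i - p i) + (Real.exp (u j - p j) +
        ∑ k ∈ (Sstar.erase j).erase i, Real.exp (u k - p k)) + a0 =
        Real.exp (u j - p j) + (Real.exp (u i - p i) +
        ∑ k ∈ (Sstar.erase j).erase i, Real.exp (u k - p k)) + a0 := by ring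
    rw [hdeq] at hopt'
    have hnlt : p j * Real.exp (u j - p j) + (p i * Real.exp (u i - p i) +
        ∑ k ∈ (Sstar.erase j).erase i, p k * Real.exp (u k - p k)) <
        b * Real.exp (u i - p i) + (a * Real.exp (u j - p j) +
        ∑ k ∈ (Sstar.erase j).erase i, p k * Real.exp (u k - p k)) := by
      rw [ha, hb]
      nlinarith [mul_pos (sub_pos.2 hcu) (sub_pos.2 heij)]
    rw [div_le_div_iff₀ hdpos hdpos] at hopt'
    have h6 := mul_lt_mul_of_pos_right hnlt hdpos
    linarith
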